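/- Let L₁,…,L_d be d homogeneous linear forms on ℝ^d with nonzero determinant D, and let δ₁,…,δ_d be positive reals whose product equals |D|. Then there exists a nonzero integer vector v ∈ ℤ^d such that |L₁(v)| ≤ δ₁ and |L_i(v)| < δ_i for i = 2,…,d. -/

import Mathlib

open MeasureTheory Set ENNReal
lemma minkowski_aux (d : ℕ) (hd : 0 < d)
    (L : Matrix (Fin d) (Fin d) ℝ) (hL : L.det ≠ 0)
    (δ : Fin d → ℝ) (hδ : ∀ i, 0 < δ i) (hprod : |L.det| < ∏ i, δ i) :
    ∃ v : Fin d → ℤ, v ≠ 0 ∧ ∀ i, |L.mulVec (fun j => (v j : ℝ)) i| < δ i := by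
  have : Nonempty (Fin d) := ⟨⟨0, hd⟩⟩
  set b := Pi.basisFun ℝ (Fin d)
  set f : (Fin d → ℝ) →ₗ[ℝ] (Fin d → ℝ) := Matrix.toLin' L with hf
  set s : Set (Fin d → ℝ) := f ⁻¹' (Set.pi Set.univ fun i => Ioo (-(δ i)) (δ i)) with hs
  have fund := ZSpan.isAddFundamentalDomain' b (volume : Measure (Fin d → ℝ))
  have hFvol : volume (ZSpan.fundamentalDomain b) = 1 := by
    rw [ZSpan.fundamentalDomain_pi_basisFun, volume_pi_pi]
    simp [Real.volume_Ico]
  have hdetf : LinearMap.det f = L.det := LinearMap.det_toLin' L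
  have hsvol : volume s = ENNReal.ofReal |L.det|⁻¹ * ∏ i, ENNReal.ofReal (2 * δ i) := by
    rw [hs, Measure.addHaar_preimage_linearMap volume (by rw [hdetf]; exact hL),
      hdetf, volume_pi_pi]
    simp_rw [Real.volume_Ioo]
    have h2 : ∀ i : Fin d, δ i - -δ i = 2 * δ i := fun i => by ring
    simp_rw [h2, abs_inv]
  have hlt : volume (ZSpan.fundamentalDomain b) * 2 ^ Module.finrank ℝ (Fin d → ℝ) < volume s := by
    rw [hFvol, hsvol, one_mul, Module.finrank_fintype_fun_eq_card, Fintype.card_fin]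
    have hprodpos : 0 < ∏ i, δ i := Finset.prod_pos fun i _ => hδ i
    have h1 : ∏ i, ENNReal.ofReal (2 * δ i) = ENNReal.ofReal (2 ^ d * ∏ i, δ i) := by
      rw [← ENNReal.ofReal_prod_of_nonneg (fun i _ => mul_nonneg (by norm_num) (hδ i).le)]
      congr 1
      rw [Finset.prod_mul_distrib]
      simp [Finset.prod_const]
    rw [h1, ← ENNReal.ofReal_mul (by positivity)]
    calc (2 : ℝ≥0∞) ^ d = ENNReal.ofReal (2 ^ d) := by
          simp [ENNReal.ofReal_pow]
      _ < _ := by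
          rw [ENNReal.ofReal_lt_ofReal_iff (by positivity)]
          have habs : 0 < |L.det| := abs_pos.mpr hL
          rw [mul_comm (|L.det|)⁻¹ _, mul_assoc, lt_mul_iff_one_lt_right (by positivity),
            ← div_eq_mul_inv, one_lt_div habs]
          exact hprod
  have h_symm : ∀ x ∈ s, -x ∈ s := by
    intro x hx
    simp only [hs, Set.mem_preimage, map_neg, Set.mem_pi, Set.mem_univ, forall_true_left,
      Pi.neg_apply, Set.mem_Ioo] at hx ⊢
    intro i
    constructor
    · linarith [(hx i).2]
    · linarith [(hx i).1]
  have h_conv : Convex ℝ s :=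
    (convex_pi fun i _ => convex_Ioo _ _).linear_preimage f
  haveI : Countable ↥(Submodule.span ℤ (Set.range ⇑b)).toAddSubgroup :=
    inferInstanceAs (Countable (Submodule.span ℤ (Set.range ⇑b)))
  obtain ⟨x, hx0, hxs⟩ :=
    exists_ne_zero_mem_lattice_of_measure_mul_two_pow_lt_measure fund h_symm h_conv hlt
  -- x : (span ℤ (range b)).toAddSubgroup
  have hxmem : (x : Fin d → ℝ) ∈ Submodule.span ℤ (Set.range ⇑b) := x.2
  rw [Module.Basis.mem_span_iff_repr_mem] at hxmem
  choose v hv using hxmem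
  simp only [Pi.basisFun_repr, algebraMap_int_eq, eq_intCast] at hv
  have hvx : (fun j => (v j : ℝ)) = (x : Fin d → ℝ) := funext fun j => hv j
  refine ⟨v, ?_, ?_⟩
  · intro hvz
    apply hx0
    have : (x : Fin d → ℝ) = 0 := by
      rw [← hvx, hvz]
      funext i
      simp
    exact Subtype.ext this
  · intro i
    have hx' : (x : Fin d → ℝ) ∈ s := hxs
    rw [hvx]
    simp only [hs, Set.mem_preimage, Set.mem_pi, Set.mem_univ, forall_true_left,
      Set.mem_Ioo] at hx'
    have := hx' i
    rw [abs_lt]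
    have hfL : f (x : Fin d → ℝ) = L.mulVec (x : Fin d → ℝ) := Matrix.toLin'_apply L _
    constructor <;> [exact hfL ▸ (this).1; exact hfL ▸ (this).2]


/-- Minkowski's theorem on linear forms: given d linear forms on ℝ^d with nonzero
determinant D and positive reals δ₁,…,δ_d with ∏ δᵢ = |D|, there is a nonzero
integer vector v with |L₁(v)| ≤ δ₁ and |Lᵢ(v)| < δᵢ for i ≥ 2. -/
theorem minkowski_linear_forms (d : ℕ) (hd : 0 < d)
    (L : Matrix (Fin d) (Fin d) ℝ) (hL : L.det ≠ 0)
    (δ : Fin d → ℝ) (hδ : ∀ i, 0 < δ i) (hprod : ∏ i, δ i = |L.det|) :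
    ∃ v : Fin d → ℤ, v ≠ 0 ∧
      |L.mulVec (fun j => (v j : ℝ)) ⟨0, hd⟩| ≤ δ ⟨0, hd⟩ ∧
      ∀ i : Fin d, i ≠ ⟨0, hd⟩ → |L.mulVec (fun j => (v j : ℝ)) i| < δ i := by
  set i0 : Fin d := ⟨0, hd⟩
  set g : (Fin d → ℤ) → ℝ := fun v => |L.mulVec (fun j => (v j : ℝ)) i0| with hg
  have key : ∀ ε : ℝ, 0 < ε → ∃ v : Fin d → ℤ, v ≠ 0 ∧
      g v < δ i0 + ε ∧
      ∀ i, i ≠ i0 → |L.mulVec (fun j => (v j : ℝ)) i| < δ i := by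
    intro ε hε
    set δ' := Function.update δ i0 (δ i0 + ε) with hδ'
    have hδ'pos : ∀ i, 0 < δ' i := by
      intro i
      rcases eq_or_ne i i0 with h | h
      · rw [h, hδ', Function.update_self]; linarith [hδ i0]
      · rw [hδ', Function.update_of_ne h]; exact hδ i
    have hprod' : |L.det| < ∏ i, δ' i := by
      rw [← hprod, hδ', Finset.prod_update_of_mem (Finset.mem_univ i0), ← Finset.erase_eq,
        ← Finset.mul_prod_erase Finset.univ δ (Finset.mem_univ i0)]
      have hpos : 0 < ∏ i ∈ Finset.univ.erase i0, δ i :=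
        Finset.prod_pos fun i _ => hδ i
      nlinarith
    obtain ⟨v, hv0, hv⟩ := minkowski_aux d hd L hL δ' hδ'pos hprod'
    refine ⟨v, hv0, ?_, fun i hi => ?_⟩
    · have := hv i0
      rwa [hδ', Function.update_self] at this
    · have := hv i
      rwa [hδ', Function.update_of_ne hi] at this
  set C : Set (Fin d → ℤ) := {v | v ≠ 0 ∧ g v < δ i0 + 1 ∧
    ∀ i, i ≠ i0 → |L.mulVec (fun j => (v j : ℝ)) i| < δ i} with hC
  have hCne : C.Nonempty := by
    obtain ⟨v, h1, h2, h3⟩ := key 1 one_pos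
    exact ⟨v, h1, h2, h3⟩
  have hCfin : C.Finite := by
    have hI : Invertible L := L.invertibleOfIsUnitDet (isUnit_iff_ne_zero.mpr hL)
    set e : (Fin d → ℝ) ≃ₗ[ℝ] (Fin d → ℝ) := L.toLinearEquiv' hI with he
    set K : Set (Fin d → ℝ) :=
      e ⁻¹' (Set.pi Set.univ fun i => Icc (-(δ i + 1)) (δ i + 1)) with hK
    have hKcpt : IsCompact K := by
      have hc : IsCompact (Set.pi Set.univ fun i => Icc (-(δ i + 1)) (δ i + 1)) :=
        isCompact_univ_pi fun i => isCompact_Icc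
      exact e.toContinuousLinearEquiv.toHomeomorph.isCompact_preimage.mpr hc
    obtain ⟨R, hR⟩ := hKcpt.isBounded.subset_closedBall 0
    set N : ℤ := ⌈R⌉ with hN
    refine Set.Finite.subset (Set.finite_Icc (fun _ => -N) (fun _ => N)) ?_
    intro v hv
    have heapp : e (fun j => (v j : ℝ)) = L.mulVec (fun j => (v j : ℝ)) := by
      have : (e : (Fin d → ℝ) →ₗ[ℝ] (Fin d → ℝ)) = Matrix.toLin' L :=
        Matrix.toLinearEquiv'_apply L hI
      calc e (fun j => (v j : ℝ))
          = (e : (Fin d → ℝ) →ₗ[ℝ] (Fin d → ℝ)) (fun j => (v j : ℝ)) := rfl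
        _ = Matrix.toLin' L (fun j => (v j : ℝ)) := by rw [this]
        _ = _ := Matrix.toLin'_apply L _
    have hvK : (fun j => (v j : ℝ)) ∈ K := by
      simp only [hK, Set.mem_preimage, Set.mem_pi, Set.mem_univ, forall_true_left, Set.mem_Icc,
        heapp]
      intro i
      have habs : |L.mulVec (fun j => (v j : ℝ)) i| ≤ δ i + 1 := by
        rcases eq_or_ne i i0 with h | h
        · subst h; exact le_of_lt hv.2.1
        · have := hv.2.2 i h; linarith [(hδ i).le]
      rw [abs_le] at habs
      exact habs
    have hball := hR hvK
    rw [Metric.mem_closedBall, dist_zero_right] at hball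
    have hb : ∀ j, |(v j : ℝ)| ≤ R := by
      intro j
      set w : Fin d → ℝ := fun j => (v j : ℝ) with hw
      calc |(v j : ℝ)| = ‖w j‖ := (Real.norm_eq_abs _).symm
        _ ≤ ‖w‖ := norm_le_pi_norm w j
        _ ≤ R := hball
    have hRN : (R : ℝ) ≤ (N : ℝ) := Int.le_ceil R
    rw [Set.mem_Icc]
    refine ⟨?_, ?_⟩ <;> (rw [Pi.le_def]; intro j)
    · have := (abs_le.mp (hb j)).1
      have h1 : ((-N : ℤ) : ℝ) ≤ (v j : ℝ) := by push_cast; linarith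
      exact_mod_cast h1
    · have := (abs_le.mp (hb j)).2
      have h1 : ((v j : ℤ) : ℝ) ≤ ((N : ℤ) : ℝ) := by push_cast; linarith
      exact_mod_cast h1
  obtain ⟨v₀, hv₀C, hmin⟩ := hCfin.toFinset.exists_min_image g (by
    rw [Set.Finite.toFinset_nonempty]; exact hCne)
  rw [Set.Finite.mem_toFinset] at hv₀C
  refine ⟨v₀, hv₀C.1, ?_, hv₀C.2.2⟩
  by_contra hgt
  push_neg at hgt
  have hε : 0 < min (g v₀ - δ i0) 1 := lt_min (by linarith) one_pos
  obtain ⟨v, hv0, hv1, hv2⟩ := key _ hε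
  have hvC : v ∈ C := by
    refine ⟨hv0, lt_of_lt_of_le hv1 ?_, hv2⟩
    have := min_le_right (g v₀ - δ i0) 1
    linarith
  have hle : g v₀ ≤ g v := hmin v (by rwa [Set.Finite.mem_toFinset])
  have : g v < δ i0 + (g v₀ - δ i0) :=
    lt_of_lt_of_le hv1 (by linarith [min_le_left (g v₀ - δ i0) 1])
  linarith
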